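/- If the random variable Π_{h=0}^∞ A_h(U_{h−1},…,U_0)^{−1} (the nondecreasing limit of the partial products, with values in [1,∞]) is integrable, then P(U_h < A_h(U_{h−1},…,U_0) for every h ∈ ℕ) > 0. -/

import Mathlib

open MeasureTheory ENNReal
open Filter

/-- Theorem "rinnov": with `(U_h)_{h∈ℕ}` i.i.d. uniform on `[0,1)`, `A_0 ∈ (0,1]`
constant and `A_h : [0,1)^h → (0,1]` Borel measurable, if the random variable
`Π_{h=0}^∞ A_h(U_{h−1},…,U_0)^{−1}` (the nondecreasing limit of the partial products,
with values in `[1,∞]`) is integrable, then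
`P(U_h < A_h(U_{h−1},…,U_0) for every h) > 0`. -/
theorem stmt8 {Ω : Type*} [MeasurableSpace Ω] (P : Measure Ω) [IsProbabilityMeasure P]
    (U : ℕ → Ω → ℝ) (hUmeas : ∀ i, Measurable (U i))
    (hIndep : ProbabilityTheory.iIndepFun U P)
    (hUnif : ∀ i, Measure.map (U i) P = volume.restrict (Set.Ico (0 : ℝ) 1))
    (A : (h : ℕ) → (Fin h → ℝ) → ℝ) (hAmeas : ∀ h, Measurable (A h))
    (hA : ∀ (h : ℕ) (u : Fin h → ℝ), (∀ i, u i ∈ Set.Ico (0 : ℝ) 1) →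
      A h u ∈ Set.Ioc (0 : ℝ) 1)
    (hint : ∫⁻ ω, (⨆ n : ℕ, ∏ h ∈ Finset.range (n + 1),
        (ENNReal.ofReal (A h (fun i : Fin h => U (i : ℕ) ω)))⁻¹) ∂P < ⊤) :
    0 < P {ω | ∀ h : ℕ, U h ω < A h (fun i : Fin h => U (i : ℕ) ω)} := by
  classical
  -- abbreviations
  set c : ℕ → Ω → ℝ≥0∞ := fun h ω =>
    if U h ω < A h (fun i : Fin h => U (i : ℕ) ω) then
      (ENNReal.ofReal (A h (fun i : Fin h => U (i : ℕ) ω)))⁻¹ else 0 with hc_def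
  set f : ℕ → Ω → ℝ≥0∞ := fun n ω => ∏ h ∈ Finset.range n, c h ω with hf_def
  set B : Ω → ℝ≥0∞ := fun ω => ⨆ n : ℕ, ∏ h ∈ Finset.range (n + 1),
      (ENNReal.ofReal (A h (fun i : Fin h => U (i : ℕ) ω)))⁻¹ with hB_def
  have hAU : ∀ h, Measurable fun ω => A h (fun i : Fin h => U (i : ℕ) ω) :=
    fun h => (hAmeas h).comp (measurable_pi_lambda _ fun i => hUmeas i)
  have hcmeas : ∀ h, Measurable (c h) := fun h =>
    Measurable.ite (measurableSet_lt (hUmeas h) (hAU h))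
      (measurable_ofReal.comp (hAU h)).inv measurable_const
  have hfmeas : ∀ n, Measurable (f n) := fun n =>
    Finset.measurable_prod _ (fun h _ => hcmeas h)
  -- a.e. all coordinates in [0,1)
  have hG : ∀ᵐ ω ∂P, ∀ i, U i ω ∈ Set.Ico (0 : ℝ) 1 := by
    rw [MeasureTheory.ae_all_iff]
    intro i
    have h0 : P (U i ⁻¹' (Set.Ico (0:ℝ) 1)ᶜ) = 0 := by
      rw [← Measure.map_apply (hUmeas i) measurableSet_Ico.compl, hUnif i,
        Measure.restrict_apply measurableSet_Ico.compl]
      simp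
    rw [ae_iff]
    exact h0
  -- finite-coordinate representation
  set g : (n : ℕ) → (Fin n → ℝ) → ℝ≥0∞ := fun n u =>
    ∏ h : Fin n, (if u h < A h.1 (fun i : Fin h.1 => u ⟨i.1, lt_trans i.2 h.2⟩) then
        (ENNReal.ofReal (A h.1 (fun i : Fin h.1 => u ⟨i.1, lt_trans i.2 h.2⟩)))⁻¹ else 0)
    with hg_def
  have hfg : ∀ n ω, g n (fun i : Fin n => U (i : ℕ) ω) = f n ω := by
    intro n ω
    exact Fin.prod_univ_eq_prod_range (fun h => c h ω) n
  have hgmeas : ∀ n, Measurable (g n) := by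
    intro n
    refine Finset.measurable_prod _ (fun h _ => ?_)
    have hπ : Measurable fun u : Fin n → ℝ => (fun i : Fin h.1 => u ⟨i.1, lt_trans i.2 h.2⟩) :=
      measurable_pi_lambda _ fun i => measurable_pi_apply _
    exact Measurable.ite
      (measurableSet_lt (measurable_pi_apply h) ((hAmeas h.1).comp hπ))
      (measurable_ofReal.comp ((hAmeas h.1).comp hπ)).inv measurable_const
  have hVmeas : ∀ n, Measurable fun ω => (fun i : Fin n => U (i : ℕ) ω) :=
    fun n => measurable_pi_lambda _ fun i => hUmeas i
  -- independence of the first n coordinates from the n-th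
  have hindep : ∀ n, ProbabilityTheory.IndepFun
      (fun ω => (fun i : Fin n => U (i : ℕ) ω)) (U n) P := by
    intro n
    have h1 := hIndep.indepFun_finset (Finset.range n) {n}
      (by simp [Finset.disjoint_singleton_right]) hUmeas
    have hφ : Measurable (fun v : {x // x ∈ Finset.range n} → ℝ =>
        (fun i : Fin n => v ⟨(i : ℕ), Finset.mem_range.2 i.2⟩)) :=
      measurable_pi_lambda _ fun i => measurable_pi_apply _
    have hψ : Measurable (fun w : {x // x ∈ ({n} : Finset ℕ)} → ℝ =>
        w ⟨n, Finset.mem_singleton_self n⟩) := measurable_pi_apply _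
    exact h1.comp hφ hψ
  have key : ∀ n, ∫⁻ ω, f n ω ∂P = 1 := by
    intro n
    induction n with
    | zero => simp [hf_def]
    | succ n ih =>
      set ν := P.map (fun ω => (fun i : Fin n => U (i : ℕ) ω)) with hν
      have : IsProbabilityMeasure ν := Measure.isProbabilityMeasure_map (hVmeas n).aemeasurable
      have hms : MeasurableSet {v : Fin n → ℝ | ∀ i, v i ∈ Set.Ico (0:ℝ) 1} := by
        have he : {v : Fin n → ℝ | ∀ i, v i ∈ Set.Ico (0:ℝ) 1}
            = ⋂ i, (fun v : Fin n → ℝ => v i) ⁻¹' Set.Ico 0 1 := by ext v; simp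
        rw [he]
        exact MeasurableSet.iInter fun i => measurable_pi_apply i measurableSet_Ico
      have hνae : ∀ᵐ v ∂ν, ∀ i, v i ∈ Set.Ico (0:ℝ) 1 := by
        rw [hν]
        exact (MeasureTheory.ae_map_iff (hVmeas n).aemeasurable hms).mpr
          (hG.mono fun ω h i => h i)
      have hH : Measurable fun p : (Fin n → ℝ) × ℝ =>
          g n p.1 * (if p.2 < A n p.1 then (ENNReal.ofReal (A n p.1))⁻¹ else 0) := by
        refine ((hgmeas n).comp measurable_fst).mul ?_
        exact Measurable.ite (measurableSet_lt measurable_snd ((hAmeas n).comp measurable_fst))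
          ((measurable_ofReal.comp ((hAmeas n).comp measurable_fst)).inv) measurable_const
      have step1 : ∫⁻ ω, f (n+1) ω ∂P
          = ∫⁻ p : (Fin n → ℝ) × ℝ,
              g n p.1 * (if p.2 < A n p.1 then (ENNReal.ofReal (A n p.1))⁻¹ else 0)
              ∂(P.map (fun ω => ((fun i : Fin n => U (i : ℕ) ω), U n ω))) := by
        rw [lintegral_map hH ((hVmeas n).prodMk (hUmeas n))]
        refine lintegral_congr fun ω => ?_
        show f (n+1) ω = g n (fun i : Fin n => U (i:ℕ) ω) * c n ω
        rw [hfg n ω]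
        exact Finset.prod_range_succ _ n
      have hmapeq : P.map (fun ω => ((fun i : Fin n => U (i:ℕ) ω), U n ω))
          = ν.prod (P.map (U n)) :=
        (ProbabilityTheory.indepFun_iff_map_prod_eq_prod_map_map
          (hVmeas n).aemeasurable (hUmeas n).aemeasurable).mp (hindep n)
      have inner : ∀ᵐ v ∂ν, (∫⁻ t, g n v * (if t < A n v then (ENNReal.ofReal (A n v))⁻¹ else 0)
            ∂(volume.restrict (Set.Ico (0:ℝ) 1))) = g n v := by
        filter_upwards [hνae] with v hv
        obtain ⟨hA0, hA1⟩ := hA n v hv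
        have h1 : (fun t : ℝ => (if t < A n v then (ENNReal.ofReal (A n v))⁻¹ else 0))
            = Set.indicator (Set.Iio (A n v)) (fun _ => (ENNReal.ofReal (A n v))⁻¹) := by
          funext t; simp [Set.indicator_apply, Set.mem_Iio]
        rw [lintegral_const_mul _ (by rw [h1]; exact measurable_const.indicator measurableSet_Iio),
          h1, lintegral_indicator measurableSet_Iio, setLIntegral_const,
          Measure.restrict_apply measurableSet_Iio]
        have hset : Set.Iio (A n v) ∩ Set.Ico (0:ℝ) 1 = Set.Ico 0 (A n v) := by
          ext x
          simp only [Set.mem_inter_iff, Set.mem_Iio, Set.mem_Ico]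
          constructor
          · rintro ⟨h1, h2, _⟩; exact ⟨h2, h1⟩
          · rintro ⟨h1, h2⟩; exact ⟨h2, h1, lt_of_lt_of_le h2 hA1⟩
        rw [hset, Real.volume_Ico, sub_zero,
          ENNReal.inv_mul_cancel (by simp [ENNReal.ofReal_eq_zero, not_le, hA0])
            ENNReal.ofReal_ne_top, mul_one]
      calc ∫⁻ ω, f (n+1) ω ∂P
          = ∫⁻ p : (Fin n → ℝ) × ℝ,
              g n p.1 * (if p.2 < A n p.1 then (ENNReal.ofReal (A n p.1))⁻¹ else 0)
              ∂(ν.prod (volume.restrict (Set.Ico (0:ℝ) 1))) := by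
            rw [step1, hmapeq, hUnif n]
        _ = ∫⁻ v, (∫⁻ t, g n v * (if t < A n v then (ENNReal.ofReal (A n v))⁻¹ else 0)
              ∂(volume.restrict (Set.Ico (0:ℝ) 1))) ∂ν := lintegral_prod _ hH.aemeasurable
        _ = ∫⁻ v, g n v ∂ν := lintegral_congr_ae inner
        _ = ∫⁻ ω, g n (fun i : Fin n => U (i:ℕ) ω) ∂P := by
            rw [hν, lintegral_map (hgmeas n) (hVmeas n)]
        _ = ∫⁻ ω, f n ω ∂P := lintegral_congr fun ω => hfg n ω
        _ = 1 := ih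
  set E := {ω | ∀ h : ℕ, U h ω < A h (fun i : Fin h => U (i : ℕ) ω)} with hE_def
  set F : Ω → ℝ≥0∞ := fun ω => if ω ∈ E then B ω else 0 with hF_def
  have hc_le : ∀ h ω, c h ω ≤ (ENNReal.ofReal (A h (fun i : Fin h => U (i:ℕ) ω)))⁻¹ := by
    intro h ω
    by_cases hb : U h ω < A h (fun i : Fin h => U (i:ℕ) ω) <;> simp [hc_def, hb]
  have hinv1 : ∀ᵐ ω ∂P, ∀ h,
      (1:ℝ≥0∞) ≤ (ENNReal.ofReal (A h (fun i : Fin h => U (i:ℕ) ω)))⁻¹ := by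
    filter_upwards [hG] with ω hω h
    rw [ENNReal.one_le_inv]
    exact ENNReal.ofReal_le_one.mpr (hA h _ (fun i => hω i)).2
  have h_bound : ∀ n, f n ≤ᵐ[P] B := by
    intro n
    filter_upwards [hinv1] with ω hω
    calc f n ω ≤ ∏ h ∈ Finset.range n,
          (ENNReal.ofReal (A h (fun i : Fin h => U (i:ℕ) ω)))⁻¹ :=
        Finset.prod_le_prod' fun h _ => hc_le h ω
      _ ≤ ∏ h ∈ Finset.range (n+1),
          (ENNReal.ofReal (A h (fun i : Fin h => U (i:ℕ) ω)))⁻¹ := by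
        rw [Finset.prod_range_succ]
        calc (∏ h ∈ Finset.range n, (ENNReal.ofReal (A h (fun i : Fin h => U (i:ℕ) ω)))⁻¹)
            = (∏ h ∈ Finset.range n,
              (ENNReal.ofReal (A h (fun i : Fin h => U (i:ℕ) ω)))⁻¹) * 1 := (mul_one _).symm
          _ ≤ _ := mul_le_mul_right (hω n) _
      _ ≤ B ω := le_iSup (fun m => ∏ h ∈ Finset.range (m+1),
          (ENNReal.ofReal (A h (fun i : Fin h => U (i:ℕ) ω)))⁻¹) n
  have h_lim : ∀ᵐ ω ∂P, Tendsto (fun n => f n ω) atTop (nhds (F ω)) := by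
    filter_upwards [hinv1] with ω hω
    by_cases hωE : ω ∈ E
    · have hcf : ∀ n, f n ω = ∏ h ∈ Finset.range n,
          (ENNReal.ofReal (A h (fun i : Fin h => U (i:ℕ) ω)))⁻¹ :=
        fun n => Finset.prod_congr rfl fun h _ => if_pos (hωE h)
      have hmono : Monotone (fun n => ∏ h ∈ Finset.range n,
          (ENNReal.ofReal (A h (fun i : Fin h => U (i:ℕ) ω)))⁻¹) := by
        apply monotone_nat_of_le_succ
        intro n
        rw [Finset.prod_range_succ]
        calc (∏ h ∈ Finset.range n, (ENNReal.ofReal (A h (fun i : Fin h => U (i:ℕ) ω)))⁻¹)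
            = (∏ h ∈ Finset.range n,
              (ENNReal.ofReal (A h (fun i : Fin h => U (i:ℕ) ω)))⁻¹) * 1 := (mul_one _).symm
          _ ≤ _ := mul_le_mul_right (hω n) _
      have hsup : (⨆ n, ∏ h ∈ Finset.range n,
          (ENNReal.ofReal (A h (fun i : Fin h => U (i:ℕ) ω)))⁻¹) = B ω := by
        refine le_antisymm (iSup_le fun n => ?_) (iSup_le fun n => ?_)
        · exact le_trans (hmono n.le_succ) (le_iSup (fun m => ∏ h ∈ Finset.range (m+1),
            (ENNReal.ofReal (A h (fun i : Fin h => U (i:ℕ) ω)))⁻¹) n)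
        · exact le_iSup (fun m => ∏ h ∈ Finset.range m,
            (ENNReal.ofReal (A h (fun i : Fin h => U (i:ℕ) ω)))⁻¹) (n+1)
      have ht := tendsto_atTop_iSup hmono
      rw [hsup] at ht
      have hFB : F ω = B ω := if_pos hωE
      rw [hFB]
      exact ht.congr fun n => (hcf n).symm
    · have hF0 : F ω = 0 := if_neg hωE
      rw [hF0]
      obtain ⟨h₀, hh₀⟩ := not_forall.mp hωE
      refine tendsto_const_nhds.congr' ?_
      filter_upwards [eventually_ge_atTop (h₀+1)] with n hn
      exact (Finset.prod_eq_zero (Finset.mem_range.mpr (lt_of_lt_of_le (Nat.lt_succ_self h₀) hn))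
        (show c h₀ ω = 0 from if_neg hh₀)).symm
  have hlim := tendsto_lintegral_of_dominated_convergence B hfmeas h_bound hint.ne h_lim
  have h1 : Tendsto (fun n => ∫⁻ ω, f n ω ∂P) atTop (nhds 1) := by
    simp only [key]
    exact (tendsto_const_nhds : Tendsto (fun _ : ℕ => (1:ℝ≥0∞)) atTop (nhds 1))
  have hF1 : ∫⁻ ω, F ω ∂P = 1 := tendsto_nhds_unique hlim h1
  by_contra hPE
  rw [not_lt, le_zero_iff] at hPE
  have hae : ∀ᵐ ω ∂P, ω ∉ E := by
    rw [ae_iff]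
    simp only [not_not]
    exact hPE
  have hF0 : ∫⁻ ω, F ω ∂P = 0 := by
    rw [lintegral_congr_ae (hae.mono fun ω hω => if_neg hω)]
    exact lintegral_zero
  exact one_ne_zero (hF1 ▸ hF0)
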